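/- In an ICC digraph, the terminal vertex v_{n_i}^i of Type-I path P_i can decode its message x_{n_i}^i from the ICC code: specifically, x_{n_i}^i equals the XOR of the codeword w' = ⊕_{h=1}^k x_{n_h}^h, the sums ⊕_{a=q_i}^{n_h−1} w_a^h over all h ≠ i with n_{ih} = 0, the values x_1^{ih} ⊕ x_{n_h}^h over all h ≠ i with n_{ih} ≥ 1, and the side-information messages x_{q_i}^h (for h with n_{ih}=0) and x_1^{ih} (for h with n_{ih} ≥ 1), all of which v_{n_i}^i knows or can derive. -/
import Mathlib


/-- An ICC digraph with `k` Type-I paths. `n1 i ≥ 1` is the number of vertices of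
Type-I path `P_i`; `n2 i j` is the number of vertices of Type-II path `P_{i,j}`
(`0` if empty, and `n2 i i = 0`); `q i j` (1-based, `1 ≤ q i j ≤ n1 j`) is the
index of the vertex of `P_j` that the arc leaving `P_{i,j}` (or, if `P_{i,j}` is
empty, the arc leaving the terminal vertex of `P_i`) points to. -/
structure ICCDigraph (k : ℕ) where
  n1 : Fin k → ℕ
  hn1 : ∀ i, 1 ≤ n1 i
  n2 : Fin k → Fin k → ℕ
  hdiag : ∀ i, n2 i i = 0
  q : Fin k → Fin k → ℕ
  hq1 : ∀ i j, 1 ≤ q i j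
  hq2 : ∀ i j, q i j ≤ n1 j

namespace ICCDigraph

variable {k : ℕ} (D : ICCDigraph k)

/-- The vertex set: vertices `v_{a+1}^i = ⟨i, a⟩` of Type-I paths (0-based `a`),
and vertices `v_{b+1}^{ij} = ⟨(i,j), b⟩` of Type-II paths. -/
abbrev Vtx : Type :=
  (Σ i : Fin k, Fin (D.n1 i)) ⊕ (Σ p : Fin k × Fin k, Fin (D.n2 p.1 p.2))

/-- The terminal vertex `v_{n_i}^i` of Type-I path `P_i`. -/
def terminal (i : Fin k) : D.Vtx :=
  Sum.inl ⟨i, ⟨D.n1 i - 1, by have := D.hn1 i; omega⟩⟩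

/-- The arc relation of the ICC digraph: arcs along Type-I and Type-II paths,
and the interconnecting arcs. -/
def Arc : D.Vtx → D.Vtx → Prop
  | Sum.inl ⟨i, a⟩, Sum.inl ⟨j, a'⟩ =>
      (i = j ∧ (a' : ℕ) = (a : ℕ) + 1) ∨
      (i ≠ j ∧ (a : ℕ) = D.n1 i - 1 ∧ D.n2 i j = 0 ∧ (a' : ℕ) = D.q i j - 1)
  | Sum.inl ⟨i, a⟩, Sum.inr ⟨p, b⟩ =>
      i = p.1 ∧ (a : ℕ) = D.n1 i - 1 ∧ (b : ℕ) = 0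
  | Sum.inr ⟨p, b⟩, Sum.inr ⟨p', b'⟩ =>
      p = p' ∧ (b' : ℕ) = (b : ℕ) + 1
  | Sum.inr ⟨p, b⟩, Sum.inl ⟨j, a⟩ =>
      p.2 = j ∧ (b : ℕ) = D.n2 p.1 p.2 - 1 ∧ (a : ℕ) = D.q p.1 p.2 - 1

/-- A closed directed walk (cycle) starting and ending at `v`, visiting the
vertices `v :: l`. -/
def IsClosedWalk (v : D.Vtx) (l : List D.Vtx) : Prop :=
  List.Chain D.Arc v (l ++ [v])

/-- `S` induces an acyclic subdigraph: no directed cycle lies within `S`. -/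
def AcyclicOn (S : Finset D.Vtx) : Prop :=
  ¬ ∃ (v : D.Vtx) (l : List D.Vtx), v ∈ S ∧ (∀ u ∈ l, u ∈ S) ∧ D.IsClosedWalk v l

open Classical in
/-- `MAIS(D)`: the maximum order of an acyclic induced subdigraph. -/
noncomputable def mais : ℕ :=
  (Finset.univ.filter fun S : Finset D.Vtx => D.AcyclicOn S).sup Finset.card

/-- The message (1-based index `a`) of the `a`-th vertex of Type-I path `P_i`
(`0` if out of range). -/
def msgI {t : ℕ} (x : D.Vtx → Fin t → ZMod 2) (i : Fin k) (a : ℕ) :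
    Fin t → ZMod 2 :=
  if h : 1 ≤ a ∧ a ≤ D.n1 i then x (Sum.inl ⟨i, ⟨a - 1, by omega⟩⟩) else 0

/-- The message (1-based index `b`) of the `b`-th vertex of Type-II path
`P_{i,j}` (`0` if out of range). -/
def msgII {t : ℕ} (x : D.Vtx → Fin t → ZMod 2) (i j : Fin k) (b : ℕ) :
    Fin t → ZMod 2 :=
  if h : 1 ≤ b ∧ b ≤ D.n2 i j then x (Sum.inr ⟨(i, j), ⟨b - 1, by show b - 1 < D.n2 i j; omega⟩⟩) else 0

/-- Index set of the ICC code's codewords: the `n_i - 1` codewords along each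
Type-I path, the `n_{ij} - 1` codewords along each Type-II path, one codeword per
nonempty Type-II path, and the single codeword `⊕ᵢ x_{n_i}^i`. -/
abbrev CodeIdx : Type :=
  (Σ i : Fin k, Fin (D.n1 i - 1)) ⊕
    ((Σ p : Fin k × Fin k, Fin (D.n2 p.1 p.2 - 1)) ⊕
      (({p : Fin k × Fin k // 1 ≤ D.n2 p.1 p.2}) ⊕ Unit))

/-- The ICC code: `w_a^i = x_a^i ⊕ x_{a+1}^i`, `w_b^{ij} = x_b^{ij} ⊕ x_{b+1}^{ij}`,
`w_{n_{ij}}^{ij} = x_{n_{ij}}^{ij} ⊕ x_{q_i}^j`, and `w' = ⊕ᵢ x_{n_i}^i`. -/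
def code {t : ℕ} (x : D.Vtx → Fin t → ZMod 2) : D.CodeIdx → Fin t → ZMod 2
  | Sum.inl ⟨i, a⟩ => D.msgI x i ((a : ℕ) + 1) + D.msgI x i ((a : ℕ) + 2)
  | Sum.inr (Sum.inl ⟨p, b⟩) =>
      D.msgII x p.1 p.2 ((b : ℕ) + 1) + D.msgII x p.1 p.2 ((b : ℕ) + 2)
  | Sum.inr (Sum.inr (Sum.inl ⟨p, _⟩)) =>
      D.msgII x p.1 p.2 (D.n2 p.1 p.2) + D.msgI x p.2 (D.q p.1 p.2)
  | Sum.inr (Sum.inr (Sum.inr _)) => ∑ i : Fin k, D.msgI x i (D.n1 i)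

end ICCDigraph

lemma tele_aux {M : Type*} [AddCommGroup M] (h2 : ∀ a : M, a + a = 0)
    (g : ℕ → M) (q n : ℕ) (hqn : q ≤ n) :
    ∑ a ∈ Finset.Ico q n, (g a + g (a + 1)) = g q + g n := by
  induction n, hqn using Nat.le_induction with
  | base => simp [h2]
  | succ n hn ih =>
      rw [Finset.sum_Ico_succ_top hn, ih, add_assoc, ← add_assoc (g n) (g n),
        h2, zero_add]

open Finset in
/-- The terminal vertex `v_{n_i}^i` decodes its message: `x_{n_i}^i`
equals the XOR of `w' = ⊕_h x_{n_h}^h`, the sums `⊕_{a=q_i}^{n_h-1} w_a^h` over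
`h ≠ i` with `n_{ih} = 0`, the values `x_1^{ih} ⊕ x_{n_h}^h` over `h ≠ i` with
`n_{ih} ≥ 1`, and the side information `x_{q_i}^h` (for `n_{ih} = 0`) and
`x_1^{ih}` (for `n_{ih} ≥ 1`). -/
theorem stmt12 {k t : ℕ} (D : ICCDigraph k) (i : Fin k)
    (x : D.Vtx → Fin t → ZMod 2) :
    D.msgI x i (D.n1 i) =
      (∑ h : Fin k, D.msgI x h (D.n1 h)) +
      (∑ h ∈ univ.filter fun h => h ≠ i ∧ D.n2 i h = 0,
        ∑ a ∈ Finset.Ico (D.q i h) (D.n1 h),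
          (D.msgI x h a + D.msgI x h (a + 1))) +
      (∑ h ∈ univ.filter fun h => h ≠ i ∧ 1 ≤ D.n2 i h,
        (D.msgII x i h 1 + D.msgI x h (D.n1 h))) +
      (∑ h ∈ univ.filter fun h => h ≠ i ∧ D.n2 i h = 0,
        D.msgI x h (D.q i h)) +
      (∑ h ∈ univ.filter fun h => h ≠ i ∧ 1 ≤ D.n2 i h,
        D.msgII x i h 1) := by
  classical
  have h2 : ∀ a : Fin t → ZMod 2, a + a = 0 := fun a =>
    funext fun j => CharTwo.add_self_eq_zero _
  have hcancel : ∀ a b : Fin t → ZMod 2, a + b + a = b := fun a b => by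
    rw [add_comm a b, add_assoc, h2, add_zero]
  set f : Fin k → Fin t → ZMod 2 := fun h => D.msgI x h (D.n1 h) with hf
  -- combine the telescoping sums with the side information
  have e24 : ∀ h : Fin k,
      (∑ a ∈ Finset.Ico (D.q i h) (D.n1 h),
        (D.msgI x h a + D.msgI x h (a + 1))) + D.msgI x h (D.q i h) = f h := by
    intro h
    rw [tele_aux h2 (fun a => D.msgI x h a) _ _ (D.hq2 i h)]
    exact hcancel _ _
  have e35 : ∀ h : Fin k,
      (D.msgII x i h 1 + f h) + D.msgII x i h 1 = f h := fun h => hcancel _ _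
  have key : ∀ (S : Finset (Fin k)) (g1 g2 : Fin k → Fin t → ZMod 2),
      (∀ h ∈ S, g1 h + g2 h = f h) →
      (∑ h ∈ S, g1 h) + ∑ h ∈ S, g2 h = ∑ h ∈ S, f h := by
    intro S g1 g2 hg
    rw [← Finset.sum_add_distrib]
    exact Finset.sum_congr rfl hg
  have hA := key (Finset.univ.filter fun h => h ≠ i ∧ D.n2 i h = 0)
    (fun h => ∑ a ∈ Finset.Ico (D.q i h) (D.n1 h),
      (D.msgI x h a + D.msgI x h (a + 1)))
    (fun h => D.msgI x h (D.q i h)) (fun h _ => e24 h)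
  have hB := key (Finset.univ.filter fun h => h ≠ i ∧ 1 ≤ D.n2 i h)
    (fun h => D.msgII x i h 1 + f h)
    (fun h => D.msgII x i h 1) (fun h _ => e35 h)
  have hrearr : ∀ S1 SA SB TA TB : Fin t → ZMod 2,
      S1 + SA + SB + TA + TB = S1 + (SA + TA) + (SB + TB) := fun _ _ _ _ _ => by
    abel
  rw [hrearr, hA, hB]
  -- the two filters partition `univ.erase i`
  have hfiltA : (Finset.univ.filter fun h => h ≠ i ∧ D.n2 i h = 0)
      = (Finset.univ.erase i).filter fun h => D.n2 i h = 0 := by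
    rw [← Finset.filter_ne' Finset.univ i, Finset.filter_filter]
  have hfiltB : (Finset.univ.filter fun h => h ≠ i ∧ 1 ≤ D.n2 i h)
      = (Finset.univ.erase i).filter fun h => ¬ D.n2 i h = 0 := by
    rw [← Finset.filter_ne' Finset.univ i, Finset.filter_filter]
    apply Finset.filter_congr
    intro h _
    simp [Nat.one_le_iff_ne_zero]
  rw [hfiltA, hfiltB, add_assoc,
    Finset.sum_filter_add_sum_filter_not (Finset.univ.erase i) _ f]
  have hsum : (∑ h : Fin k, f h) = f i + ∑ h ∈ Finset.univ.erase i, f h :=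
    (Finset.add_sum_erase Finset.univ f (Finset.mem_univ i)).symm
  rw [hsum, add_assoc, h2, add_zero]
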